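/- Let W ≤ GL(ℂ^n) be a well-generated complex reflection group with Coxeter element c, let Z_1, …, Z_k be flats of W, and let π be a permutation of {1, …, k}. Then the number of block factorizations (w_1, …, w_k) of c with V^{w_i} in the W-orbit of Z_i for all i equals the number of block factorizations (w_1, …, w_k) of c with V^{w_i} in the W-orbit of Z_{π(i)} for all i. -/

import Mathlib

open scoped Classical

noncomputable section

namespace CRG

/-- The ambient space `ℂⁿ`. -/
abbrev V (n : ℕ) := Fin n → ℂ

/-- The group `GL(ℂⁿ)` of linear automorphisms of `ℂⁿ`. -/
abbrev GLn (n : ℕ) := V n ≃ₗ[ℂ] V n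

/-- The fixed space `V^t = ker (t - id)` of a linear automorphism. -/
def fixedSpace {n : ℕ} (t : GLn n) : Submodule ℂ (V n) :=
  LinearMap.ker (t.toLinearMap - LinearMap.id)

/-- A pseudo-reflection: an element of finite order whose fixed space has codimension 1. -/
def IsPseudoReflection {n : ℕ} (t : GLn n) : Prop :=
  IsOfFinOrder t ∧ Module.finrank ℂ (fixedSpace t) + 1 = n

/-- The set of pseudo-reflections belonging to a subgroup `W`. -/
def pseudoReflections {n : ℕ} (W : Subgroup (GLn n)) : Set (GLn n) :=
  {t | t ∈ W ∧ IsPseudoReflection t}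

/-- A complex reflection group: a finite subgroup generated by its pseudo-reflections. -/
def IsReflectionGroup {n : ℕ} (W : Subgroup (GLn n)) : Prop :=
  Finite W ∧ Subgroup.closure (pseudoReflections W) = W

/-- `W` is irreducible: no nonzero proper subspace is `W`-invariant. -/
def IsIrreducible {n : ℕ} (W : Subgroup (GLn n)) : Prop :=
  ∀ U : Submodule ℂ (V n), (∀ w ∈ W, ∀ v ∈ U, w v ∈ U) → U = ⊥ ∨ U = ⊤

/-- `W` is well-generated: an irreducible complex reflection group generated by `n`
pseudo-reflections. -/
def IsWellGenerated {n : ℕ} (W : Subgroup (GLn n)) : Prop :=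
  IsReflectionGroup W ∧ IsIrreducible W ∧
    ∃ S : Finset (GLn n), S.card = n ∧ ↑S ⊆ pseudoReflections W ∧
      Subgroup.closure (S : Set (GLn n)) = W

/-- The reflecting hyperplanes of `W`: fixed spaces of its pseudo-reflections. -/
def reflHyperplanes {n : ℕ} (W : Subgroup (GLn n)) : Set (Submodule ℂ (V n)) :=
  {H | ∃ t ∈ pseudoReflections W, fixedSpace t = H}

/-- The (generalized) Coxeter number `h = (N + N*)/r`, where `N` is the number of
reflecting hyperplanes, `N*` the number of pseudo-reflections, and `r` the rank. -/
def coxNumber {n : ℕ} (W : Subgroup (GLn n)) (r : ℕ) : ℕ :=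
  ((reflHyperplanes W).ncard + (pseudoReflections W).ncard) / r

/-- A Coxeter element of the reflection group `W` of rank `r`: an element of `W` with an
eigenvector of eigenvalue `exp(2πi/h)` lying on no reflecting hyperplane of `W`. -/
def IsCoxeterElementOf {n : ℕ} (W : Subgroup (GLn n)) (r : ℕ) (c : GLn n) : Prop :=
  c ∈ W ∧ ∃ v : V n, (∀ H ∈ reflHyperplanes W, v ∉ H) ∧
    c v = Complex.exp (((2 * Real.pi : ℝ) : ℂ) * Complex.I / (coxNumber W r : ℂ)) • v

/-- A Coxeter element of `W ≤ GL(ℂⁿ)` (full rank `n`). -/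
def IsCoxeterElement {n : ℕ} (W : Subgroup (GLn n)) (c : GLn n) : Prop :=
  IsCoxeterElementOf W n c

/-- A flat of `W`: an intersection of reflecting hyperplanes (with `V` as the
empty intersection). -/
def IsFlat {n : ℕ} (W : Subgroup (GLn n)) (Z : Submodule ℂ (V n)) : Prop :=
  ∃ 𝒮 : Set (Submodule ℂ (V n)), 𝒮 ⊆ reflHyperplanes W ∧ Z = sInf 𝒮

/-- The pointwise stabilizer `W_Z` of `Z` in `W`. -/
def pointwiseStab {n : ℕ} (W : Subgroup (GLn n)) (Z : Submodule ℂ (V n)) :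
    Subgroup (GLn n) where
  carrier := {w | w ∈ W ∧ ∀ z ∈ Z, w z = z}
  one_mem' := ⟨W.one_mem, fun _ _ => rfl⟩
  mul_mem' := by
    rintro a b ⟨ha, ha'⟩ ⟨hb, hb'⟩
    refine ⟨W.mul_mem ha hb, fun z hz => ?_⟩
    show a (b z) = z
    rw [hb' z hz, ha' z hz]
  inv_mem' := by
    rintro a ⟨ha, ha'⟩
    refine ⟨W.inv_mem ha, fun z hz => ?_⟩
    show a.symm z = z
    conv_lhs => rw [← ha' z hz]
    exact a.symm_apply_apply z

/-- The setwise stabilizer `N_W(Z)` of `Z` in `W` (elements with `wZ = Z`). -/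
def setwiseStab {n : ℕ} (W : Subgroup (GLn n)) (Z : Submodule ℂ (V n)) :
    Subgroup (GLn n) where
  carrier := {w | w ∈ W ∧ ∀ z : V n, z ∈ Z ↔ w z ∈ Z}
  one_mem' := ⟨W.one_mem, fun _ => Iff.rfl⟩
  mul_mem' := by
    rintro a b ⟨ha, ha'⟩ ⟨hb, hb'⟩
    refine ⟨W.mul_mem ha hb, fun z => ?_⟩
    have h1 : (a * b) z = a (b z) := rfl
    rw [h1]
    exact (hb' z).trans (ha' (b z))
  inv_mem' := by
    rintro a ⟨ha, ha'⟩
    refine ⟨W.inv_mem ha, fun z => ?_⟩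
    have h1 : (a⁻¹ : GLn _) z = a.symm z := rfl
    rw [h1]
    have h2 := ha' (a.symm z)
    rw [a.apply_symm_apply] at h2
    exact h2.symm

/-- The index `[N_W(Z) : W_Z]` of the pointwise stabilizer in the setwise stabilizer. -/
def stabIndex {n : ℕ} (W : Subgroup (GLn n)) (Z : Submodule ℂ (V n)) : ℕ :=
  Subgroup.relIndex (pointwiseStab W Z) (setwiseStab W Z)

/-- The reflection length `l_R(w)`: the least number of pseudo-reflections of `W`
whose product is `w`. -/
def reflLength {n : ℕ} (W : Subgroup (GLn n)) (w : GLn n) : ℕ :=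
  sInf {s | ∃ l : List (GLn n), l.length = s ∧ (∀ t ∈ l, t ∈ pseudoReflections W) ∧
    l.prod = w}

/-- `Z'` lies in the `W`-orbit of `Z`. -/
def inWOrbit {n : ℕ} (W : Subgroup (GLn n)) (Z Z' : Submodule ℂ (V n)) : Prop :=
  ∃ u ∈ W, Submodule.map (u : GLn n).toLinearMap Z = Z'

/-- `w` is a parabolic Coxeter element of type `[Z]`: its fixed space lies in the
`W`-orbit of `Z`, and `w` is a Coxeter element of the parabolic subgroup `W_{V^w}`
(whose rank is the codimension of `V^w`). -/
def IsParabolicCoxeterOfType {n : ℕ} (W : Subgroup (GLn n)) (Z : Submodule ℂ (V n))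
    (w : GLn n) : Prop :=
  inWOrbit W Z (fixedSpace w) ∧
    IsCoxeterElementOf (pointwiseStab W (fixedSpace w))
      (n - Module.finrank ℂ (fixedSpace w)) w

/-- A single Hurwitz move on tuples: replacing an adjacent pair `(wᵢ, wᵢ₊₁)` by
`(wᵢ₊₁, wᵢ₊₁⁻¹ wᵢ wᵢ₊₁)`. -/
def HurwitzMove {G : Type*} [Group G] {k : ℕ} (a b : Fin k → G) : Prop :=
  ∃ (i : ℕ) (hi : i + 1 < k),
    b ⟨i, Nat.lt_of_succ_lt hi⟩ = a ⟨i + 1, hi⟩ ∧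
    b ⟨i + 1, hi⟩ = (a ⟨i + 1, hi⟩)⁻¹ * a ⟨i, Nat.lt_of_succ_lt hi⟩ * a ⟨i + 1, hi⟩ ∧
    ∀ j : Fin k, (j : ℕ) ≠ i → (j : ℕ) ≠ i + 1 → b j = a j

/-- Hurwitz equivalence: related by a finite sequence of Hurwitz moves and
inverse Hurwitz moves. -/
def HurwitzEquiv {G : Type*} [Group G] {k : ℕ} (a b : Fin k → G) : Prop :=
  Relation.EqvGen HurwitzMove a b

/-- A (reduced) block factorization of `c`: a tuple of nonidentity elements of `W`
whose product is `c` and whose reflection lengths add up to that of `c`. -/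
def IsBlockFactorization {n : ℕ} (W : Subgroup (GLn n)) (c : GLn n) {k : ℕ}
    (w : Fin k → GLn n) : Prop :=
  (∀ i, w i ∈ W ∧ w i ≠ 1) ∧ (List.ofFn w).prod = c ∧
    (∑ i, reflLength W (w i)) = reflLength W c

/-- A `W`-invariant polynomial: `p(w v) = p(v)` for all `w ∈ W`. -/
def IsInvariantPoly {n : ℕ} (W : Subgroup (GLn n)) (p : MvPolynomial (Fin n) ℂ) : Prop :=
  ∀ w ∈ W, ∀ v : V n, MvPolynomial.eval (w v) p = MvPolynomial.eval v p

/-- A system of basic invariants for `W`, with (nondecreasing) degrees `d`. -/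
def IsBasicInvariantSystem {n : ℕ} (W : Subgroup (GLn n))
    (f : Fin n → MvPolynomial (Fin n) ℂ) (d : Fin n → ℕ) : Prop :=
  (∀ i, (f i).IsHomogeneous (d i)) ∧ Monotone d ∧ AlgebraicIndependent ℂ f ∧
    (∀ i, IsInvariantPoly W (f i)) ∧
    ∀ p : MvPolynomial (Fin n) ℂ, IsInvariantPoly W p →
      p ∈ Algebra.adjoin ℂ (Set.range f)

/-- A point of `ℂⁿ` with real coordinates. -/
def IsRealPoint {n : ℕ} (v : V n) : Prop := ∀ i, (v i).im = 0

/-- A linear automorphism defined over `ℝ` (preserving the real points). -/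
def PreservesReal {n : ℕ} (w : GLn n) : Prop :=
  ∀ v : V n, IsRealPoint v → IsRealPoint (w v)

/-- A (complexified) Weyl group: a finite group of real linear automorphisms generated
by reflections (involutions fixing a hyperplane) and stabilizing a full-rank lattice. -/
def IsWeylGroup {n : ℕ} (W : Subgroup (GLn n)) : Prop :=
  Finite W ∧ (∀ w ∈ W, PreservesReal w) ∧
    Subgroup.closure {t : GLn n | t ∈ W ∧ IsPseudoReflection t ∧ t * t = 1} = W ∧
    ∃ b : Fin n → V n, (∀ i, IsRealPoint (b i)) ∧ LinearIndependent ℂ b ∧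
      ∀ w ∈ W, ∀ i, w (b i) ∈ Submodule.span ℤ (Set.range b)

/-- The intersection lattice of the arrangement `𝒜` inside the ambient space `U`
(all intersections of subfamilies, with `U` as the empty intersection). -/
def interLattice {n : ℕ} (𝒜 : Finset (Submodule ℂ (V n))) (U : Submodule ℂ (V n)) :
    Finset (Submodule ℂ (V n)) :=
  𝒜.powerset.image (fun S => S.inf id ⊓ U)

/-- `μ` is the Möbius function `μ(U, ·)` of the intersection lattice of `𝒜` in `U`:
`μ(U,U) = 1` and for `X < U` in the lattice, `∑_{X ≤ Y ≤ U} μ(U,Y) = 0`. -/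
def IsMoebius {n : ℕ} (𝒜 : Finset (Submodule ℂ (V n))) (U : Submodule ℂ (V n))
    (μ : Submodule ℂ (V n) → ℤ) : Prop :=
  μ U = 1 ∧ ∀ X ∈ interLattice 𝒜 U, X ≠ U →
    (∑ Y ∈ (interLattice 𝒜 U).filter (fun Y => X ≤ Y), μ Y) = 0

/-- The characteristic polynomial `χ(𝒜, t) = ∑_{X ∈ L(𝒜)} μ(U,X) t^{dim X}`. -/
def charPolyμ {n : ℕ} (𝒜 : Finset (Submodule ℂ (V n))) (U : Submodule ℂ (V n))
    (μ : Submodule ℂ (V n) → ℤ) : Polynomial ℤ :=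
  ∑ X ∈ interLattice 𝒜 U, Polynomial.C (μ X) * Polynomial.X ^ (Module.finrank ℂ X)

/-- The restricted arrangement `𝒜_W^Z = {H ⊓ Z : H a reflecting hyperplane, Z ⊄ H}`. -/
def restrictedArrangement {n : ℕ} (W : Subgroup (GLn n)) (Z : Submodule ℂ (V n)) :
    Set (Submodule ℂ (V n)) :=
  {K | ∃ H ∈ reflHyperplanes W, ¬ Z ≤ H ∧ K = H ⊓ Z}

/-- The multiplicity of a polynomial at the origin: the minimal total degree of a
monomial occurring in it. -/
def multiplicityAtZero {n : ℕ} (q : MvPolynomial (Fin n) ℂ) : ℕ :=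
  sInf {D : ℕ | ∃ m ∈ q.support, (m.sum fun _ e => e) = D}

/- ### Auxiliary machinery for the main theorem -/

section Aux

variable {n : ℕ}

lemma mem_fixedSpace' {t : GLn n} {v : V n} : v ∈ fixedSpace t ↔ t v = v := by
  simp [fixedSpace, LinearMap.mem_ker, sub_eq_zero]

lemma fixedSpace_conj (g w : GLn n) :
    fixedSpace (g⁻¹ * w * g) = Submodule.comap (g : GLn n).toLinearMap (fixedSpace w) := by
  ext v
  rw [Submodule.mem_comap, mem_fixedSpace', mem_fixedSpace']
  have h : (g⁻¹ * w * g) v = g.symm (w (g v)) := rfl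
  have h2 : (g : GLn n).toLinearMap v = g v := rfl
  rw [h, h2, LinearEquiv.symm_apply_eq]

lemma finrank_fixedSpace_conj (g w : GLn n) :
    Module.finrank ℂ (fixedSpace (g⁻¹ * w * g)) = Module.finrank ℂ (fixedSpace w) := by
  rw [fixedSpace_conj, Submodule.comap_equiv_eq_map_symm, LinearEquiv.finrank_map_eq]

lemma isOfFinOrder_conj {g t : GLn n} (h : IsOfFinOrder t) : IsOfFinOrder (g⁻¹ * t * g) := by
  have := ((MulAut.conj (g⁻¹)).toMonoidHom : GLn n →* GLn n).isOfFinOrder h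
  simpa [MulAut.conj_apply] using this

lemma conj_mem_pseudoReflections {W : Subgroup (GLn n)} {g t : GLn n} (hg : g ∈ W)
    (ht : t ∈ pseudoReflections W) : g⁻¹ * t * g ∈ pseudoReflections W := by
  refine ⟨W.mul_mem (W.mul_mem (W.inv_mem hg) ht.1) hg, isOfFinOrder_conj ht.2.1, ?_⟩
  rw [finrank_fixedSpace_conj]
  exact ht.2.2

lemma exists_list_conj {W : Subgroup (GLn n)} {g : GLn n} (hg : g ∈ W) {w : GLn n} {s : ℕ}
    (h : ∃ l : List (GLn n), l.length = s ∧ (∀ t ∈ l, t ∈ pseudoReflections W) ∧ l.prod = w) :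
    ∃ l : List (GLn n), l.length = s ∧ (∀ t ∈ l, t ∈ pseudoReflections W) ∧
      l.prod = g⁻¹ * w * g := by
  obtain ⟨l, hl, hm, hp⟩ := h
  refine ⟨l.map (fun t => g⁻¹ * t * g), by simp [hl], ?_, ?_⟩
  · intro t ht
    obtain ⟨u, hu, rfl⟩ := List.mem_map.1 ht
    exact conj_mem_pseudoReflections hg (hm u hu)
  · subst hp
    clear hm hl
    induction l with
    | nil => simp
    | cons x l ih =>
      simp only [List.map_cons, List.prod_cons, ih]
      group

lemma reflLength_conj {W : Subgroup (GLn n)} {g : GLn n} (hg : g ∈ W) (w : GLn n) :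
    reflLength W (g⁻¹ * w * g) = reflLength W w := by
  unfold reflLength
  congr 1
  ext s
  constructor
  · intro h
    have h2 := exists_list_conj (W.inv_mem hg) h
    have e : (g⁻¹)⁻¹ * (g⁻¹ * w * g) * g⁻¹ = w := by group
    rwa [e] at h2
  · exact exists_list_conj hg

lemma inWOrbit_comap {W : Subgroup (GLn n)} {u : GLn n} (hu : u ∈ W)
    {Z X : Submodule ℂ (V n)} (h : inWOrbit W Z X) :
    inWOrbit W Z (Submodule.comap (u : GLn n).toLinearMap X) := by
  obtain ⟨v, hv, rfl⟩ := h
  refine ⟨u⁻¹ * v, W.mul_mem (W.inv_mem hu) hv, ?_⟩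
  have h1 : ((u⁻¹ * v : GLn n)).toLinearMap
      = (u⁻¹ : GLn n).toLinearMap ∘ₗ v.toLinearMap := rfl
  rw [h1, Submodule.map_comp, Submodule.comap_equiv_eq_map_symm]
  rfl

lemma inWOrbit_fixedSpace_conj {W : Subgroup (GLn n)} {g : GLn n} (hg : g ∈ W)
    {Z : Submodule ℂ (V n)} {w : GLn n}
    (h : inWOrbit W Z (fixedSpace w)) : inWOrbit W Z (fixedSpace (g⁻¹ * w * g)) := by
  rw [fixedSpace_conj]
  exact inWOrbit_comap hg h

section Moves
variable {G : Type*} [Group G] {k : ℕ}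

/-- The Hurwitz move at position `i`. -/
def hmove (i : ℕ) (hi : i + 1 < k) (a : Fin k → G) : Fin k → G :=
  fun j => if j = (⟨i, Nat.lt_of_succ_lt hi⟩ : Fin k) then a ⟨i+1, hi⟩
    else if j = (⟨i+1, hi⟩ : Fin k) then
      (a ⟨i+1, hi⟩)⁻¹ * a ⟨i, Nat.lt_of_succ_lt hi⟩ * a ⟨i+1, hi⟩
    else a j

/-- The inverse Hurwitz move at position `i`. -/
def hmove' (i : ℕ) (hi : i + 1 < k) (a : Fin k → G) : Fin k → G :=
  fun j => if j = (⟨i, Nat.lt_of_succ_lt hi⟩ : Fin k) then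
      a ⟨i, Nat.lt_of_succ_lt hi⟩ * a ⟨i+1, hi⟩ * (a ⟨i, Nat.lt_of_succ_lt hi⟩)⁻¹
    else if j = (⟨i+1, hi⟩ : Fin k) then a ⟨i, Nat.lt_of_succ_lt hi⟩
    else a j

variable (i : ℕ) (hi : i + 1 < k) (a : Fin k → G)

lemma ne_mk : (⟨i, Nat.lt_of_succ_lt hi⟩ : Fin k) ≠ ⟨i+1, hi⟩ := by simp [Fin.ext_iff]

lemma hmove_left : hmove i hi a ⟨i, Nat.lt_of_succ_lt hi⟩ = a ⟨i+1, hi⟩ := if_pos rfl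

lemma hmove_right : hmove i hi a ⟨i+1, hi⟩ =
    (a ⟨i+1, hi⟩)⁻¹ * a ⟨i, Nat.lt_of_succ_lt hi⟩ * a ⟨i+1, hi⟩ := by
  unfold hmove
  rw [if_neg (ne_mk i hi).symm, if_pos rfl]

lemma hmove_other (j : Fin k) (h1 : (j:ℕ) ≠ i) (h2 : (j:ℕ) ≠ i+1) : hmove i hi a j = a j := by
  unfold hmove
  rw [if_neg (by simpa [Fin.ext_iff] using h1), if_neg (by simpa [Fin.ext_iff] using h2)]

lemma hmove'_left : hmove' i hi a ⟨i, Nat.lt_of_succ_lt hi⟩ =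
    a ⟨i, Nat.lt_of_succ_lt hi⟩ * a ⟨i+1, hi⟩ * (a ⟨i, Nat.lt_of_succ_lt hi⟩)⁻¹ := if_pos rfl

lemma hmove'_right : hmove' i hi a ⟨i+1, hi⟩ = a ⟨i, Nat.lt_of_succ_lt hi⟩ := by
  unfold hmove'
  rw [if_neg (ne_mk i hi).symm, if_pos rfl]

lemma hmove'_other (j : Fin k) (h1 : (j:ℕ) ≠ i) (h2 : (j:ℕ) ≠ i+1) : hmove' i hi a j = a j := by
  unfold hmove'
  rw [if_neg (by simpa [Fin.ext_iff] using h1), if_neg (by simpa [Fin.ext_iff] using h2)]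

lemma hmove'_hmove : hmove' i hi (hmove i hi a) = a := by
  funext j
  by_cases h1 : j = (⟨i, Nat.lt_of_succ_lt hi⟩ : Fin k)
  · subst h1
    rw [hmove'_left, hmove_left, hmove_right]
    group
  by_cases h2 : j = (⟨i+1, hi⟩ : Fin k)
  · subst h2
    rw [hmove'_right, hmove_left]
  · have h1' : (j:ℕ) ≠ i := fun h => h1 (Fin.ext h)
    have h2' : (j:ℕ) ≠ i+1 := fun h => h2 (Fin.ext h)
    rw [hmove'_other _ _ _ _ h1' h2', hmove_other _ _ _ _ h1' h2']

lemma hmove_hmove' : hmove i hi (hmove' i hi a) = a := by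
  funext j
  by_cases h1 : j = (⟨i, Nat.lt_of_succ_lt hi⟩ : Fin k)
  · subst h1
    rw [hmove_left, hmove'_right]
  by_cases h2 : j = (⟨i+1, hi⟩ : Fin k)
  · subst h2
    rw [hmove_right, hmove'_right, hmove'_left]
    group
  · have h1' : (j:ℕ) ≠ i := fun h => h1 (Fin.ext h)
    have h2' : (j:ℕ) ≠ i+1 := fun h => h2 (Fin.ext h)
    rw [hmove_other _ _ _ _ h1' h2', hmove'_other _ _ _ _ h1' h2']

lemma ofFn_prod_eq (a b : Fin k → G) (i : ℕ) (hi : i + 1 < k)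
    (h1 : b ⟨i, Nat.lt_of_succ_lt hi⟩ * b ⟨i+1, hi⟩
        = a ⟨i, Nat.lt_of_succ_lt hi⟩ * a ⟨i+1, hi⟩)
    (h2 : ∀ j : Fin k, (j:ℕ) ≠ i → (j:ℕ) ≠ i+1 → b j = a j) :
    (List.ofFn b).prod = (List.ofFn a).prod := by
  have hsplit : ∀ f : Fin k → G, (List.ofFn f).prod =
      ((List.ofFn f).take i).prod *
        (f ⟨i, Nat.lt_of_succ_lt hi⟩ * (f ⟨i+1, hi⟩ * ((List.ofFn f).drop (i+2)).prod)) := by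
    intro f
    have hl1 : i < (List.ofFn f).length := by
      rw [List.length_ofFn]; omega
    have hl2 : i + 1 < (List.ofFn f).length := by
      rw [List.length_ofFn]; omega
    conv_lhs => rw [← List.prod_take_mul_prod_drop (List.ofFn f) i]
    congr 1
    rw [List.drop_eq_getElem_cons hl1, List.prod_cons,
        List.drop_eq_getElem_cons hl2, List.prod_cons]
    simp [List.getElem_ofFn]
  have ht : (List.ofFn b).take i = (List.ofFn a).take i := by
    apply List.ext_getElem (by simp)
    intro j hj1 hj2
    simp only [List.length_take, List.length_ofFn] at hj1
    simp only [List.getElem_take, List.getElem_ofFn]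
    exact h2 _ (by simp; omega) (by simp; omega)
  have hd : (List.ofFn b).drop (i+2) = (List.ofFn a).drop (i+2) := by
    apply List.ext_getElem (by simp)
    intro j hj1 hj2
    simp only [List.getElem_drop, List.getElem_ofFn]
    exact h2 _ (by simp; omega) (by simp; omega)
  rw [hsplit a, hsplit b, ht, hd, ← mul_assoc (b _), h1, mul_assoc]

end Moves

/-- The count of block factorizations of `c` with orbit data `T`. -/
def cnt (W : Subgroup (GLn n)) (c : GLn n) {k : ℕ} (T : Fin k → Submodule ℂ (V n)) : ℕ :=
  Nat.card {w : Fin k → GLn n // IsBlockFactorization W c w ∧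
    ∀ i, inWOrbit W (T i) (fixedSpace (w i))}

lemma move_step {W : Subgroup (GLn n)} {c : GLn n} {k : ℕ} (i : ℕ) (hi : i + 1 < k)
    (T : Fin k → Submodule ℂ (V n)) (a : Fin k → GLn n)
    (hBF : IsBlockFactorization W c a) (hT : ∀ j, inWOrbit W (T j) (fixedSpace (a j))) :
    IsBlockFactorization W c (hmove i hi a) ∧
      ∀ j, inWOrbit W (T (Equiv.swap (⟨i, Nat.lt_of_succ_lt hi⟩ : Fin k) ⟨i+1, hi⟩ j))
        (fixedSpace (hmove i hi a j)) := by
  obtain ⟨hmem, hprod, hsum⟩ := hBF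
  set i' : Fin k := ⟨i, Nat.lt_of_succ_lt hi⟩ with hi'
  set i'' : Fin k := ⟨i+1, hi⟩ with hi''
  have hb_i : hmove i hi a i' = a i'' := hmove_left i hi a
  have hb_i1 : hmove i hi a i'' = (a i'')⁻¹ * a i' * a i'' := hmove_right i hi a
  have hmem'' := (hmem i'').1
  refine ⟨⟨?_, ?_, ?_⟩, ?_⟩
  · intro j
    by_cases h1 : j = i'
    · subst h1
      rw [hb_i]
      exact hmem i''
    by_cases h2 : j = i''
    · subst h2
      rw [hb_i1]
      refine ⟨W.mul_mem (W.mul_mem (W.inv_mem hmem'') (hmem i').1) hmem'', ?_⟩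
      intro h
      apply (hmem i').2
      have e : a i'' * ((a i'')⁻¹ * a i' * a i'') * (a i'')⁻¹ = a i' := by group
      rw [h] at e
      simpa using e.symm
    · rw [hmove_other i hi a j (fun h => h1 (Fin.ext h)) (fun h => h2 (Fin.ext h))]
      exact hmem j
  · rw [← hprod]
    apply ofFn_prod_eq
    · rw [hb_i, hb_i1]; show _ = a i' * a i''; group
    · exact fun j h1 h2 => hmove_other i hi a j h1 h2
  · rw [← hsum]
    refine Fintype.sum_equiv (Equiv.swap i' i'') _ _ ?_
    intro j
    by_cases h1 : j = i'
    · subst h1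
      rw [hb_i, Equiv.swap_apply_left]
    by_cases h2 : j = i''
    · subst h2
      rw [hb_i1, Equiv.swap_apply_right]
      exact reflLength_conj hmem'' _
    · rw [hmove_other i hi a j (fun h => h1 (Fin.ext h)) (fun h => h2 (Fin.ext h)),
        Equiv.swap_apply_of_ne_of_ne h1 h2]
  · intro j
    by_cases h1 : j = i'
    · subst h1
      rw [hb_i, Equiv.swap_apply_left]
      exact hT i''
    by_cases h2 : j = i''
    · subst h2
      rw [hb_i1, Equiv.swap_apply_right]
      exact inWOrbit_fixedSpace_conj hmem'' (hT i')
    · rw [hmove_other i hi a j (fun h => h1 (Fin.ext h)) (fun h => h2 (Fin.ext h)),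
        Equiv.swap_apply_of_ne_of_ne h1 h2]
      exact hT j

lemma move_step' {W : Subgroup (GLn n)} {c : GLn n} {k : ℕ} (i : ℕ) (hi : i + 1 < k)
    (T : Fin k → Submodule ℂ (V n)) (a : Fin k → GLn n)
    (hBF : IsBlockFactorization W c a) (hT : ∀ j, inWOrbit W (T j) (fixedSpace (a j))) :
    IsBlockFactorization W c (hmove' i hi a) ∧
      ∀ j, inWOrbit W (T (Equiv.swap (⟨i, Nat.lt_of_succ_lt hi⟩ : Fin k) ⟨i+1, hi⟩ j))
        (fixedSpace (hmove' i hi a j)) := by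
  obtain ⟨hmem, hprod, hsum⟩ := hBF
  set i' : Fin k := ⟨i, Nat.lt_of_succ_lt hi⟩ with hi'
  set i'' : Fin k := ⟨i+1, hi⟩ with hi''
  have hb_i : hmove' i hi a i' = a i' * a i'' * (a i')⁻¹ := hmove'_left i hi a
  have hb_i1 : hmove' i hi a i'' = a i' := hmove'_right i hi a
  have hmem' := (hmem i').1
  have hconj : a i' * a i'' * (a i')⁻¹ = ((a i')⁻¹)⁻¹ * a i'' * (a i')⁻¹ := by group
  have hmeminv := W.inv_mem hmem'
  refine ⟨⟨?_, ?_, ?_⟩, ?_⟩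
  · intro j
    by_cases h1 : j = i'
    · subst h1
      rw [hb_i]
      refine ⟨W.mul_mem (W.mul_mem hmem' (hmem i'').1) hmeminv, ?_⟩
      intro h
      apply (hmem i'').2
      have e : (a i')⁻¹ * (a i' * a i'' * (a i')⁻¹) * a i' = a i'' := by group
      rw [h] at e
      simpa using e.symm
    by_cases h2 : j = i''
    · subst h2
      rw [hb_i1]
      exact hmem i'
    · rw [hmove'_other i hi a j (fun h => h1 (Fin.ext h)) (fun h => h2 (Fin.ext h))]
      exact hmem j
  · rw [← hprod]
    apply ofFn_prod_eq
    · rw [hb_i, hb_i1]; show _ = a i' * a i''; group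
    · exact fun j h1 h2 => hmove'_other i hi a j h1 h2
  · rw [← hsum]
    refine Fintype.sum_equiv (Equiv.swap i' i'') _ _ ?_
    intro j
    by_cases h1 : j = i'
    · subst h1
      rw [hb_i, Equiv.swap_apply_left, hconj]
      exact reflLength_conj hmeminv _
    by_cases h2 : j = i''
    · subst h2
      rw [hb_i1, Equiv.swap_apply_right]
    · rw [hmove'_other i hi a j (fun h => h1 (Fin.ext h)) (fun h => h2 (Fin.ext h)),
        Equiv.swap_apply_of_ne_of_ne h1 h2]
  · intro j
    by_cases h1 : j = i'
    · subst h1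
      rw [hb_i, Equiv.swap_apply_left, hconj]
      exact inWOrbit_fixedSpace_conj hmeminv (hT i'')
    by_cases h2 : j = i''
    · subst h2
      rw [hb_i1, Equiv.swap_apply_right]
      exact hT i'
    · rw [hmove'_other i hi a j (fun h => h1 (Fin.ext h)) (fun h => h2 (Fin.ext h)),
        Equiv.swap_apply_of_ne_of_ne h1 h2]
      exact hT j

lemma cnt_swap_adj (W : Subgroup (GLn n)) (c : GLn n) {k : ℕ} (i : ℕ) (hi : i + 1 < k)
    (T : Fin k → Submodule ℂ (V n)) :
    cnt W c T = cnt W c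
      (fun j => T (Equiv.swap (⟨i, Nat.lt_of_succ_lt hi⟩ : Fin k) ⟨i+1, hi⟩ j)) := by
  apply Nat.card_congr
  refine Equiv.mk
    (fun x => ⟨hmove i hi x.1, (move_step i hi T x.1 x.2.1 x.2.2).1,
      (move_step i hi T x.1 x.2.1 x.2.2).2⟩)
    (fun y => ⟨hmove' i hi y.1,
      (move_step' i hi (fun j => T (Equiv.swap (⟨i, Nat.lt_of_succ_lt hi⟩ : Fin k) ⟨i+1, hi⟩ j))
        y.1 y.2.1 y.2.2).1,
      fun j => by
        simpa using
          (move_step' i hi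
            (fun j => T (Equiv.swap (⟨i, Nat.lt_of_succ_lt hi⟩ : Fin k) ⟨i+1, hi⟩ j))
            y.1 y.2.1 y.2.2).2 j⟩)
    (fun x => Subtype.ext (hmove'_hmove i hi x.1))
    (fun y => Subtype.ext (hmove_hmove' i hi y.1))

lemma cnt_swap (W : Subgroup (GLn n)) (c : GLn n) {k : ℕ} :
    ∀ (d : ℕ) (x y : Fin k), (y:ℕ) = (x:ℕ) + d → ∀ T : Fin k → Submodule ℂ (V n),
      cnt W c T = cnt W c (fun j => T (Equiv.swap x y j)) := by
  intro d
  induction d using Nat.strong_induction_on with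
  | _ d ih =>
    match d with
    | 0 =>
      intro x y h T
      have hxy : x = y := Fin.ext (by omega)
      subst hxy
      simp [Equiv.swap_self]
    | 1 =>
      intro x y h T
      have hx : (x:ℕ) + 1 < k := h ▸ y.2
      have hy : y = ⟨(x:ℕ)+1, hx⟩ := Fin.ext h
      subst hy
      have := cnt_swap_adj W c (x:ℕ) hx T
      simpa only [Fin.eta] using this
    | (e+2) =>
      intro x y h T
      have hx1 : (x:ℕ)+1 < k := by have := y.2; omega
      set x' : Fin k := ⟨(x:ℕ)+1, hx1⟩ with hx'
      have hxx' : x ≠ x' := by simp [hx', Fin.ext_iff]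
      have hxy : x ≠ y := by simp [Fin.ext_iff]; omega
      have h1 : (y:ℕ) = (x':ℕ) + (e+1) := by simp [hx']; omega
      have hadj : (x':ℕ) = (x:ℕ) + 1 := rfl
      have step1 := ih (e+1) (by omega) x' y h1 T
      have step2 := ih 1 (by omega) x x' hadj.symm (fun j => T (Equiv.swap x' y j))
      have step3 := ih (e+1) (by omega) x' y h1
        (fun j => T (Equiv.swap x' y (Equiv.swap x x' j)))
      have hkey : ∀ j, Equiv.swap x' y (Equiv.swap x x' (Equiv.swap x' y j))
          = Equiv.swap x y j := by
        intro j
        have hconj := Equiv.swap_mul_swap_mul_swap hxx' hxy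
        calc Equiv.swap x' y (Equiv.swap x x' (Equiv.swap x' y j))
            = (Equiv.swap x' y * Equiv.swap x x' * Equiv.swap x' y) j := rfl
          _ = Equiv.swap y x j := by rw [hconj]
          _ = Equiv.swap x y j := by rw [Equiv.swap_comm]
      rw [step1, step2, step3]
      congr 1
      funext j
      rw [hkey]


lemma cnt_perm (W : Subgroup (GLn n)) (c : GLn n) {k : ℕ} (π : Equiv.Perm (Fin k))
    (T : Fin k → Submodule ℂ (V n)) :
    cnt W c T = cnt W c (fun j => T (π j)) := by
  have H : ∀ π : Equiv.Perm (Fin k), ∀ T : Fin k → Submodule ℂ (V n),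
      cnt W c T = cnt W c (fun j => T (π j)) := by
    intro π
    refine Equiv.Perm.swap_induction_on
      (motive := fun π => ∀ T : Fin k → Submodule ℂ (V n),
        cnt W c T = cnt W c (fun j => T (π j))) π ?_ ?_
    · intro T
      rfl
    · intro f x y hxy hf T
      have hs : cnt W c T = cnt W c (fun j => T (Equiv.swap x y j)) := by
        rcases le_total (x:ℕ) (y:ℕ) with h | h
        · exact cnt_swap W c ((y:ℕ) - (x:ℕ)) x y (by omega) T
        · rw [Equiv.swap_comm]
          exact cnt_swap W c ((x:ℕ) - (y:ℕ)) y x (by omega) T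
      rw [hs, hf (fun j => T (Equiv.swap x y j))]
      rfl
  exact H π T

end Aux

/-- **Invariance of factorization counts under permuting the passport.** For a
well-generated complex reflection group `W` with Coxeter element `c`, flats
`Z₁, …, Z_k`, and a permutation `π` of `{1, …, k}`, there are as many block
factorizations `(w₁, …, w_k)` of `c` with `V^{wᵢ}` in the orbit of `Zᵢ` for all `i`
as with `V^{wᵢ}` in the orbit of `Z_{π(i)}` for all `i`. -/
theorem count_block_factorizations_perm_invariant {n k : ℕ} (hn : 0 < n)
    (W : Subgroup (GLn n)) (hW : IsWellGenerated W)
    (c : GLn n) (hc : IsCoxeterElement W c)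
    (Z : Fin k → Submodule ℂ (V n)) (hZ : ∀ i, IsFlat W (Z i))
    (π : Equiv.Perm (Fin k)) :
    Nat.card {w : Fin k → GLn n // IsBlockFactorization W c w ∧
        ∀ i, inWOrbit W (Z i) (fixedSpace (w i))}
      = Nat.card {w : Fin k → GLn n // IsBlockFactorization W c w ∧
        ∀ i, inWOrbit W (Z (π i)) (fixedSpace (w i))} := by
  exact cnt_perm W c π Z

end CRG
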